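/- Let F be a field, n ≥ 2, 1 ≤ k ≤ n−1, let G be a generator matrix of an [n,k] MDS code over F and H a corresponding parity-check matrix. Then for every subset S of the n coordinates, the rank of the matrix G · diag(1_S) · Hᵀ equals min{k, n−k, |S|, n−|S|}. (This is the number of symbols retrieved by the (rep, e)-retrieval scheme with e = 1_S, so the scheme has rate min{k, n−k, w(e), n−w(e)}/n.) -/

import Mathlib

open Module

lemma aux_finrank_map_add {F V W : Type*} [Field F] [AddCommGroup V] [Module F V]
    [AddCommGroup W] [Module F W] [FiniteDimensional F V] (f : V →ₗ[F] W) (p : Submodule F V) :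
    finrank F (p.map f) + finrank F ↥(p ⊓ LinearMap.ker f) = finrank F p := by
  have h := LinearMap.finrank_range_add_finrank_ker (f.domRestrict p)
  rw [LinearMap.range_domRestrict, LinearMap.ker_domRestrict] at h
  rwa [← Submodule.finrank_map_subtype_eq p ((LinearMap.ker f).comap p.subtype),
    Submodule.map_comap_subtype] at h

lemma aux_span_diag_rank {F : Type*} [Field F] {n k : ℕ} (hkn : k ≤ n)
    (G : Matrix (Fin k) (Fin n) F)
    (hMDS : ∀ s : Finset (Fin n), s.card = k →
      LinearIndependent F (fun j : s => G.transpose j.val))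
    (T : Finset (Fin n)) :
    (G * Matrix.diagonal (fun i => if i ∈ T then (1 : F) else 0)).rank = min k T.card := by
  classical
  have hcol : ∀ i ∈ T, (G * Matrix.diagonal (fun i => if i ∈ T then (1 : F) else 0)).transpose i
      = G.transpose i := by
    intro i hi
    funext j
    simp [Matrix.transpose_apply, Matrix.mul_diagonal, hi]
  have hcol0 : ∀ i ∉ T, (G * Matrix.diagonal (fun i => if i ∈ T then (1 : F) else 0)).transpose i
      = 0 := by
    intro i hi
    funext j
    simp [Matrix.transpose_apply, Matrix.mul_diagonal, hi]
  have hspan : Submodule.span F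
        (Set.range (G * Matrix.diagonal (fun i => if i ∈ T then (1 : F) else 0)).transpose)
      = Submodule.span F (G.transpose '' ↑T) := by
    apply le_antisymm
    · rw [Submodule.span_le]
      rintro _ ⟨i, rfl⟩
      by_cases hi : i ∈ T
      · rw [hcol i hi]
        exact Submodule.subset_span ⟨i, hi, rfl⟩
      · rw [hcol0 i hi]
        exact Submodule.zero_mem _
    · rw [Submodule.span_le]
      rintro _ ⟨i, hi, rfl⟩
      rw [← hcol i hi]
      exact Submodule.subset_span ⟨i, rfl⟩
  have hle : ∀ s : Finset (Fin n), s.card ≤ k →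
      finrank F (Submodule.span F (G.transpose '' ↑s)) = s.card := by
    intro s hsk
    obtain ⟨t, hst, ht⟩ := Finset.exists_superset_card_eq hsk (by simpa using hkn)
    have li := hMDS t ht
    have li' : LinearIndependent F (fun j : s => G.transpose j.val) := by
      have : (fun j : s => G.transpose j.val) =
          (fun j : t => G.transpose j.val) ∘ (fun j : s => (⟨j.val, hst j.2⟩ : t)) := rfl
      rw [this]
      exact li.comp _ (fun a b hab => by
        apply Subtype.ext
        simpa using congrArg Subtype.val hab)
    have him : G.transpose '' ↑s = Set.range (fun j : s => G.transpose j.val) := by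
      ext y
      simp [Set.mem_image]
      exact Iff.rfl
    rw [him, finrank_span_eq_card li']
    simp
  rw [Matrix.rank_eq_finrank_span_cols, show Set.range (G * Matrix.diagonal (fun i => if i ∈ T then (1 : F) else 0)).col = Set.range (G * Matrix.diagonal (fun i => if i ∈ T then (1 : F) else 0)).transpose from rfl, hspan]
  rcases le_or_gt T.card k with h | h
  · rw [hle T h]
    omega
  · obtain ⟨s, hsT, hs⟩ := Finset.exists_subset_card_eq h.le
    have h1 : k ≤ finrank F (Submodule.span F (G.transpose '' ↑T)) := by
      have hm : finrank F (Submodule.span F (G.transpose '' ↑s)) ≤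
          finrank F (Submodule.span F (G.transpose '' ↑T)) :=
        Submodule.finrank_mono (Submodule.span_mono (Set.image_mono hsT))
      rw [hle s hs.le, hs] at hm
      exact hm
    have h2 : finrank F (Submodule.span F (G.transpose '' ↑T)) ≤ k := by
      have := Submodule.finrank_le (Submodule.span F (G.transpose '' ↑T) : Submodule F (Fin k → F))
      simpa using this
    omega

section
variable {F : Type*} [Field F] {n : ℕ}

/-- membership in the range of the coordinate-projection diagonal matrix -/
lemma aux_mem_range_diag (T : Finset (Fin n)) (x : Fin n → F) :
    x ∈ LinearMap.range (Matrix.diagonal (fun i => if i ∈ T then (1 : F) else 0)).mulVecLin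
      ↔ ∀ i ∉ T, x i = 0 := by
  constructor
  · rintro ⟨y, rfl⟩ i hi
    simp [Matrix.mulVecLin_apply, Matrix.mulVec_diagonal, hi]
  · intro hx
    refine ⟨x, ?_⟩
    funext i
    by_cases hi : i ∈ T
    · simp [Matrix.mulVecLin_apply, Matrix.mulVec_diagonal, hi]
    · simp [Matrix.mulVecLin_apply, Matrix.mulVec_diagonal, hi, hx i hi]

lemma aux_ker_diag (T : Finset (Fin n)) :
    LinearMap.ker (Matrix.diagonal (fun i => if i ∈ T then (1 : F) else 0)).mulVecLin
      = LinearMap.range (Matrix.diagonal (fun i => if i ∈ Tᶜ then (1 : F) else 0)).mulVecLin := by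
  ext x
  rw [aux_mem_range_diag, LinearMap.mem_ker]
  constructor
  · intro hx i hi
    have := congrFun hx i
    simp only [Finset.mem_compl, not_not] at hi
    simpa [Matrix.mulVecLin_apply, Matrix.mulVec_diagonal, hi] using this
  · intro hx
    funext i
    by_cases hi : i ∈ T
    · simp [Matrix.mulVecLin_apply, Matrix.mulVec_diagonal, hi,
        hx i (by simp [Finset.mem_compl, hi])]
    · simp [Matrix.mulVecLin_apply, Matrix.mulVec_diagonal, hi]

lemma aux_finrank_range_diag (T : Finset (Fin n)) :
    finrank F (LinearMap.range
      (Matrix.diagonal (fun i => if i ∈ T then (1 : F) else 0)).mulVecLin) = T.card := by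
  classical
  have := Matrix.rank_diagonal (fun i => if i ∈ T then (1 : F) else 0)
  rw [Matrix.rank] at this
  rw [this]
  rw [← Fintype.card_coe T]
  apply Fintype.card_congr
  apply Equiv.subtypeEquivRight
  intro i
  by_cases hi : i ∈ T <;> simp [hi]

end

/-- For an `[n,k]` MDS code with generator matrix `G` and parity-check
matrix `H`, the rank of `G · diag(1_S) · Hᵀ` equals `min {k, n−k, |S|, n−|S|}`. -/
theorem stmt_0 (F : Type*) [Field F] (n k : ℕ) (hn : 2 ≤ n) (hk1 : 1 ≤ k) (hk2 : k ≤ n - 1)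
    (G : Matrix (Fin k) (Fin n) F) (H : Matrix (Fin (n - k)) (Fin n) F)
    (hMDS : ∀ s : Finset (Fin n), s.card = k →
      LinearIndependent F (fun j : s => G.transpose j.val))
    (hH : H.rank = n - k) (hGH : G * H.transpose = 0)
    (S : Finset (Fin n)) :
    (G * Matrix.diagonal (fun i => if i ∈ S then (1 : F) else 0) * H.transpose).rank
      = min (min k (n - k)) (min S.card (n - S.card)) := by
  classical
  have hkn : k ≤ n := by omega
  have hGrankAux := aux_span_diag_rank hkn G hMDS
  have hMemRange : ∀ (T : Finset (Fin n)) (x : Fin n → F),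
      x ∈ LinearMap.range (Matrix.diagonal (fun i => if i ∈ T then (1 : F) else 0)).mulVecLin
        ↔ ∀ i ∉ T, x i = 0 := fun T x => aux_mem_range_diag T x
  have hKerDiag : ∀ T : Finset (Fin n),
      LinearMap.ker (Matrix.diagonal (fun i => if i ∈ T then (1 : F) else 0)).mulVecLin
        = LinearMap.range (Matrix.diagonal (fun i => if i ∈ Tᶜ then (1 : F) else 0)).mulVecLin :=
    fun T => aux_ker_diag T
  have hRangeDiag : ∀ T : Finset (Fin n), finrank F (LinearMap.range
      (Matrix.diagonal (fun i => if i ∈ T then (1 : F) else 0)).mulVecLin) = T.card :=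
    fun T => aux_finrank_range_diag T
  have hScard : S.card ≤ n := by simpa using S.card_le_univ
  set g := G.mulVecLin with hg
  set h := H.transpose.mulVecLin with hh
  let d : Finset (Fin n) → ((Fin n → F) →ₗ[F] (Fin n → F)) := fun T =>
    (Matrix.diagonal (fun i => if i ∈ T then (1 : F) else 0)).mulVecLin
  have hd : ∀ T, d T = (Matrix.diagonal (fun i => if i ∈ T then (1 : F) else 0)).mulVecLin :=
    fun T => rfl
  -- rank of G is k
  have hGrank : finrank F (LinearMap.range g) = k := by
    have h1 := hGrankAux Finset.univ
    have h2 : G * Matrix.diagonal (fun i : Fin n => if i ∈ Finset.univ then (1 : F) else 0)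
        = G := by
      simp [Matrix.diagonal_one]
    rw [h2] at h1
    have : G.rank = finrank F (LinearMap.range g) := rfl
    rw [this] at h1
    rw [h1]
    simp [Finset.card_univ]
    omega
  -- kernel of g equals range of h
  have hker : LinearMap.ker g = LinearMap.range h := by
    have hle : LinearMap.range h ≤ LinearMap.ker g := by
      rintro x ⟨y, rfl⟩
      rw [LinearMap.mem_ker]
      have hcomp : g (h y) = (G * H.transpose).mulVecLin y := by
        rw [Matrix.mulVecLin_mul]; rfl
      rw [hcomp, hGH]
      simp
    have h1 : finrank F (LinearMap.range h) = n - k := by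
      have : finrank F (LinearMap.range h) = H.transpose.rank := rfl
      rw [this, Matrix.rank_transpose]
      exact hH
    have h2 : finrank F (LinearMap.ker g) = n - k := by
      have h3 := LinearMap.finrank_range_add_finrank_ker g
      have h4 : finrank F (Fin n → F) = n := by simp
      rw [h4, hGrank] at h3
      omega
    exact (Submodule.eq_of_le_of_finrank_eq hle (by rw [h1, h2])).symm
  have hRrank : finrank F (LinearMap.range h) = n - k := by
    have : finrank F (LinearMap.range h) = H.transpose.rank := rfl
    rw [this, Matrix.rank_transpose]; exact hH
  -- key intersection dimension formula
  have hB : ∀ T : Finset (Fin n),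
      finrank F ↥(LinearMap.range h ⊓ LinearMap.range (Matrix.diagonal (fun i => if i ∈ T then (1 : F) else 0)).mulVecLin) + min k T.card = T.card := by
    intro T
    have e := aux_finrank_map_add g (LinearMap.range (Matrix.diagonal (fun i => if i ∈ T then (1 : F) else 0)).mulVecLin)
    have emap : Submodule.map g (LinearMap.range (Matrix.diagonal (fun i => if i ∈ T then (1 : F) else 0)).mulVecLin)
        = LinearMap.range ((G * Matrix.diagonal
            (fun i => if i ∈ T then (1 : F) else 0)).mulVecLin) := by
      rw [Matrix.mulVecLin_mul, LinearMap.range_comp]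
    have erk : finrank F (Submodule.map g (LinearMap.range (Matrix.diagonal (fun i => if i ∈ T then (1 : F) else 0)).mulVecLin)) = min k T.card := by
      rw [emap]
      exact hGrankAux T
    rw [erk, hker,
      show LinearMap.range (Matrix.diagonal (fun i => if i ∈ T then (1 : F) else 0)).mulVecLin ⊓ LinearMap.range h = LinearMap.range h ⊓ LinearMap.range (Matrix.diagonal (fun i => if i ∈ T then (1 : F) else 0)).mulVecLin
        from inf_comm _ _, hRangeDiag T] at e
    omega
  -- the target rank as finrank of an iterated image
  set P : Submodule F (Fin n → F) := Submodule.map (Matrix.diagonal (fun i => if i ∈ S then (1 : F) else 0)).mulVecLin (LinearMap.range h) with hP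
  have hgoal : (G * Matrix.diagonal (fun i => if i ∈ S then (1 : F) else 0)
      * H.transpose).rank = finrank F (Submodule.map g P) := by
    rw [Matrix.rank, Matrix.mulVecLin_mul, Matrix.mulVecLin_mul, LinearMap.range_comp,
      Submodule.map_comp]
  -- dimension of P
  have e1 := aux_finrank_map_add ((Matrix.diagonal (fun i => if i ∈ S then (1 : F) else 0)).mulVecLin) (LinearMap.range h)
  rw [hKerDiag S] at e1
  have hBc := hB Sᶜ
  have hcc : (Sᶜ : Finset (Fin n)).card = n - S.card := by
    rw [Finset.card_compl]
    simp
  rw [hcc] at hBc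
  -- dimension of the kernel part
  have e2 := aux_finrank_map_add g P
  have e4 : P ⊓ LinearMap.ker g = LinearMap.range h ⊓ LinearMap.range (Matrix.diagonal (fun i => if i ∈ S then (1 : F) else 0)).mulVecLin := by
    rw [hker]
    apply le_antisymm
    · rintro x ⟨hx1, hx2⟩
      obtain ⟨y, hy, rfl⟩ := hx1
      exact ⟨hx2, ⟨y, rfl⟩⟩
    · rintro x ⟨hx1, hx2⟩
      refine ⟨⟨x, hx1, ?_⟩, hx1⟩
      funext i
      by_cases hi : i ∈ S
      · simp [hd, Matrix.mulVecLin_apply, Matrix.mulVec_diagonal, hi]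
      · have hz := (hMemRange S x).1 hx2 i hi
        simp [hd, Matrix.mulVecLin_apply, Matrix.mulVec_diagonal, hi, hz]
  rw [e4] at e2
  have hBS := hB S
  rw [hgoal]
  rw [hRrank, ← hP] at e1
  omega
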